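/- Let a, b, c, d, q_x, q_y > 0 with a > b > c > d, set A = b c d/(a(c-d)), B' = b - c + b c/(c-d), Q = (√(B'² + 4Aa) - B')/(2A). If q_x/q_y < Q, then a q_y > (c - 2d) q_x; equivalently, the prey-only catch maximizer E₂ = a/(2 q_x) exceeds the predator extinction threshold E_y-ext = a(c-d)/(a q_y + c q_x). -/

import Mathlib

theorem stmt_10 (a b c d qx qy : ℝ) (hd : 0 < d) (hdc : d < c) (hcb : c < b)
    (hba : b < a) (hqx : 0 < qx) (hqy : 0 < qy)
    (hQ : qx / qy <
      (Real.sqrt ((b - c + b * c / (c - d)) ^ 2 + 4 * (b * c * d / (a * (c - d))) * a) -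
        (b - c + b * c / (c - d))) / (2 * (b * c * d / (a * (c - d))))) :
    (c - 2 * d) * qx < a * qy ∧
    a * (c - d) / (a * qy + c * qx) < a / (2 * qx) := by
  have hc : 0 < c := hd.trans hdc
  have hb : 0 < b := hc.trans hcb
  have ha : 0 < a := hb.trans hba
  have hcd : 0 < c - d := by linarith
  set A := b * c * d / (a * (c - d)) with hAdef
  set B := b - c + b * c / (c - d) with hBdef
  set Q := (Real.sqrt (B ^ 2 + 4 * A * a) - B) / (2 * A) with hQdef
  have hA : 0 < A := div_pos (by positivity) (mul_pos ha hcd)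
  have hD : 0 ≤ B ^ 2 + 4 * A * a := by positivity
  have hs : Real.sqrt (B ^ 2 + 4 * A * a) ^ 2 = B ^ 2 + 4 * A * a := Real.sq_sqrt hD
  have key : A * Q ^ 2 + B * Q = a := by
    rw [hQdef]
    field_simp
    nlinarith [hs, show Real.sqrt (B ^ 2 + A * 4 * a) ^ 2 = B ^ 2 + A * 4 * a from by rw [show A * 4 * a = 4 * A * a by ring]; exact hs]
  have hBgt : c - 2 * d < B := by
    have h1 : c < b * c / (c - d) := by
      rw [lt_div_iff₀ hcd]; nlinarith
    rw [hBdef]; linarith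
  have hQpos : 0 < Q := lt_trans (div_pos hqx hqy) hQ
  have hQa : (c - 2 * d) * Q < a := by
    nlinarith [mul_pos hA (pow_pos hQpos 2), mul_lt_mul_of_pos_right hBgt hQpos]
  have hxy : qx < Q * qy := (div_lt_iff₀ hqy).mp hQ
  have first : (c - 2 * d) * qx < a * qy := by
    rcases le_or_gt (c - 2 * d) 0 with h | h
    · have h1 : (c - 2 * d) * qx ≤ 0 := mul_nonpos_of_nonpos_of_nonneg h hqx.le
      have h2 : 0 < a * qy := mul_pos ha hqy
      linarith
    · have h1 := mul_lt_mul_of_pos_left hxy h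
      have h2 := mul_lt_mul_of_pos_right hQa hqy
      nlinarith
  refine ⟨first, ?_⟩
  rw [div_lt_div_iff₀ (add_pos (mul_pos ha hqy) (mul_pos hc hqx)) (by positivity)]
  nlinarith [mul_lt_mul_of_pos_left first ha]
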